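/- arXiv:math/0212066 — 2 statements merged into one kernel-verified Lean document; each statement's English description precedes it below -/
import Mathlib

section
/- If n is a prime number, then 4n ≠ C(4m, 2m) for every natural number m ≥ 1; in other words, for a prime n the number 4n does not belong to the set {C(4m, 2m) | m ∈ ℕ, m ≥ 1}. (This is the arithmetic claim used in case (d′) of the proof of Theorem 7.1 of the paper.) -/
lemma aux_pow_bound : ∀ m : ℕ, 2 ≤ m → 32 * m ^ 2 ≤ 16 ^ m := by
  intro m hm
  induction m with
  | zero => omega
  | succ k ih =>
    rcases Nat.lt_or_ge k 2 with h | h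
    · interval_cases k
      · omega
      · norm_num
    · have := ih h
      have : 16 ^ (k + 1) = 16 * 16 ^ k := by ring
      nlinarith [ih h]

/-- If `n` is a prime number, then `4 * n ≠ (4 * m).choose (2 * m)` for every
natural number `m ≥ 1`. -/
theorem four_mul_prime_ne_central_binom (n : ℕ) (hn : n.Prime) :
    ∀ m : ℕ, 1 ≤ m → 4 * n ≠ Nat.choose (4 * m) (2 * m) := by
  intro m hm h
  rcases Nat.lt_or_ge m 2 with hm2 | hm2
  · interval_cases m
    simp only [show (4:ℕ)*1 = 4 from rfl, show (2:ℕ)*1 = 2 from rfl] at h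
    norm_num [Nat.choose] at h
    omega
  · -- Bertrand: prime p with 2m < p ≤ 4m
    obtain ⟨p, hp, hlt, hle⟩ := Nat.exists_prime_lt_and_le_two_mul (2 * m) (by omega)
    have hle' : p ≤ 4 * m := by omega
    have hdvd : p ∣ Nat.choose (4 * m) (2 * m) := by
      have := Nat.Prime.dvd_choose hp (a := 2 * m) (b := 4 * m) hlt (by omega) hle'
      exact this
    rw [← h] at hdvd
    have hp2 : p ≠ 2 := by omega
    have hpn : p = n := by
      rcases (Nat.Prime.dvd_mul hp).mp hdvd with h4 | hn'
      · exact absurd ((Nat.prime_dvd_prime_iff_eq hp (by norm_num)).mp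
          ((Nat.Prime.dvd_mul hp).mp (by simpa [show (4:ℕ) = 2*2 from rfl, mul_assoc] using h4)
            |>.elim id id)) hp2
      · exact (Nat.prime_dvd_prime_iff_eq hp hn).mp hn'
    -- size contradiction
    have hcb : Nat.choose (4 * m) (2 * m) = Nat.centralBinom (2 * m) := by
      unfold Nat.centralBinom; ring_nf
    have hlow : 4 ^ (2 * m) < 2 * m * Nat.centralBinom (2 * m) :=
      Nat.four_pow_lt_mul_centralBinom (2 * m) (by omega)
    have h16 : (16 : ℕ) ^ m = 4 ^ (2 * m) := by
      rw [pow_mul]; norm_num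
    have hb := aux_pow_bound m hm2
    have hub : 4 * n ≤ 16 * m := by omega
    rw [h, hcb] at hub
    nlinarith [hub, hlow, hb, h16]
end

section
/- Let n be an odd natural number and let m ≥ 1 be a natural number such that 2n = C(4m, 2m). Then m is a power of 2; consequently there exists a natural number k ≥ 1 such that 2n = C(2^(k+1), 2^k). (This is the arithmetic claim used in case (d) of the proof of Theorem 7.1 of the paper: an even number 2n with n odd that is not of the form C(2^(m+1), 2^m) for any m ∈ ℕ is also not of the form C(4m, 2m) for any m ∈ ℕ.) -/
lemma sum_digits_two_eq_zero : ∀ x : ℕ, (Nat.digits 2 x).sum = 0 → x = 0 := by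
  intro x
  induction x using Nat.strong_induction_on with
  | _ x ih =>
    intro h
    by_contra hx
    rw [Nat.digits_def' (by norm_num) (Nat.pos_of_ne_zero hx)] at h
    simp only [List.sum_cons] at h
    have h1 : x % 2 = 0 := by omega
    have h2 : x / 2 = 0 := ih (x / 2) (Nat.div_lt_self (Nat.pos_of_ne_zero hx) one_lt_two)
      (by omega)
    omega

lemma sum_digits_two_eq_one : ∀ x : ℕ, (Nat.digits 2 x).sum = 1 → ∃ j : ℕ, x = 2 ^ j := by
  intro x
  induction x using Nat.strong_induction_on with
  | _ x ih =>
    intro h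
    have hx : x ≠ 0 := by rintro rfl; simp at h
    rw [Nat.digits_def' (by norm_num) (Nat.pos_of_ne_zero hx)] at h
    simp only [List.sum_cons] at h
    rcases Nat.even_or_odd x with he | ho
    · have h1 : x % 2 = 0 := Nat.even_iff.mp he
      obtain ⟨j, hj⟩ := ih (x / 2) (Nat.div_lt_self (Nat.pos_of_ne_zero hx) one_lt_two)
        (by omega)
      exact ⟨j + 1, by rw [pow_succ]; omega⟩
    · have h1 : x % 2 = 1 := Nat.odd_iff.mp ho
      have h2 : x / 2 = 0 := sum_digits_two_eq_zero (x / 2) (by omega)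
      exact ⟨0, by omega⟩

/-- If `n` is odd and `m ≥ 1` satisfies `2 * n = (4 * m).choose (2 * m)`, then `m` is a
power of `2`, and consequently there exists `k ≥ 1` with
`2 * n = (2 ^ (k + 1)).choose (2 ^ k)`. -/
theorem odd_double_eq_central_binom_imp (n m : ℕ) (hn : ¬ 2 ∣ n) (hm : 1 ≤ m)
    (h : 2 * n = Nat.choose (4 * m) (2 * m)) :
    (∃ j : ℕ, m = 2 ^ j) ∧
      ∃ k : ℕ, 1 ≤ k ∧ 2 * n = Nat.choose (2 ^ (k + 1)) (2 ^ k) := by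
  have hn0 : n ≠ 0 := by rintro rfl; exact hn ⟨0, rfl⟩
  -- valuation of 2*n is 1
  have hv : padicValNat 2 (2 * n) = 1 := by
    rw [padicValNat.mul (by norm_num) hn0, padicValNat.self one_lt_two,
      padicValNat.eq_zero_of_not_dvd hn]
  -- Kummer
  have hk : (2 - 1) * padicValNat 2 (Nat.choose (4 * m) (2 * m)) =
      (Nat.digits 2 (2 * m)).sum + (Nat.digits 2 (4 * m - 2 * m)).sum
        - (Nat.digits 2 (4 * m)).sum :=
    sub_one_mul_padicValNat_choose_eq_sub_sum_digits (by omega)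
  have hsub : 4 * m - 2 * m = 2 * m := by omega
  have h4 : (Nat.digits 2 (4 * m)).sum = (Nat.digits 2 (2 * m)).sum := by
    rw [Nat.digits_def' (b := 2) (by norm_num) (by omega)]
    have h1 : 4 * m % 2 = 0 := by omega
    have h2 : 4 * m / 2 = 2 * m := by omega
    rw [h1, h2]; simp
  rw [hsub, h4] at hk
  have hle : (Nat.digits 2 (2 * m)).sum ≤ 2 * m := Nat.digit_sum_le 2 (2 * m)
  have hone : (Nat.digits 2 (2 * m)).sum = 1 := by
    have := hv
    rw [h] at this
    omega
  obtain ⟨j, hj⟩ := sum_digits_two_eq_one (2 * m) hone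
  have hj1 : 1 ≤ j := by
    rcases j with _ | j
    · rw [pow_zero] at hj; omega
    · omega
  have hmj : m = 2 ^ (j - 1) := by
    have : 2 * 2 ^ (j - 1) = 2 ^ j := by
      conv_rhs => rw [show j = (j - 1) + 1 by omega]
      ring
    omega
  refine ⟨⟨j - 1, hmj⟩, j, hj1, ?_⟩
  have h1 : 2 ^ j = 2 * m := hj.symm
  have h2 : 2 ^ (j + 1) = 4 * m := by rw [pow_succ]; omega
  rw [h2, h1, h]
end
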